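/- Let d1, d2 be positive integers, α, R > 0, set r = (R/α)², and let 0 < γ ≤ 1 be such that r/γ² is an integer with r/γ² ≤ min(d1, d2). Then there exists a set S(α, γ) of d1×d2 real matrices with cardinality |S(α, γ)| = ⌊exp( r · max(d1, d2) / (16 γ²) )⌋ + 1 such that: (i) every N ∈ S(α, γ) has all entries in {−γα/2, +γα/2} (so ‖N‖_∞ = γα/2 and ‖N‖_F²/(d1 d2) = γ²α²/4), rank(N) ≤ r/γ², and N ∈ K_max(α, R); (ii) for any two distinct N, N' ∈ S(α, γ), ‖N − N'‖_F² / (d1 d2) > γ²α²/8. -/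

import Mathlib

open scoped BigOperators
open Matrix

/-- The elementwise `ℓ∞`-norm of a matrix: `max_{k,l} |M_{k,l}|`. -/
noncomputable def linfNorm {d1 d2 : ℕ} (M : Matrix (Fin d1) (Fin d2) ℝ) : ℝ :=
  ⨆ k, ⨆ l, |M k l|

/-- The Frobenius norm of a real matrix. -/
noncomputable def frobeniusNorm {d1 d2 : ℕ} (M : Matrix (Fin d1) (Fin d2) ℝ) : ℝ :=
  Real.sqrt (∑ k, ∑ l, (M k l) ^ 2)

/-- The largest `ℓ₂`-norm of a row of a matrix (the `(2,∞)` operator norm). -/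
noncomputable def rowMaxNorm {n k : ℕ} (U : Matrix (Fin n) (Fin k) ℝ) : ℝ :=
  ⨆ i, Real.sqrt (∑ j, (U i j) ^ 2)

/-- The max-norm of a real matrix: the infimum of `‖U‖_{2,∞} ‖V‖_{2,∞}` over all
factorizations `M = U * Vᵀ`. -/
noncomputable def maxNorm {d1 d2 : ℕ} (M : Matrix (Fin d1) (Fin d2) ℝ) : ℝ :=
  sInf { c : ℝ | ∃ (k : ℕ) (U : Matrix (Fin d1) (Fin k) ℝ) (V : Matrix (Fin d2) (Fin k) ℝ),
    0 < k ∧ M = U * Vᵀ ∧ c = rowMaxNorm U * rowMaxNorm V }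

open Finset

lemma card_ball_le {ι : Type*} [Fintype ι] [DecidableEq ι] (x : ι → Bool) (t : ℕ) :
    (Finset.univ.filter fun y : ι → Bool => hammingDist x y ≤ t).card
      ≤ ∑ i ∈ Finset.range (t + 1), (Fintype.card ι).choose i := by
  classical
  set T : Finset (Finset ι) :=
    (Finset.range (t + 1)).biUnion (fun i => Finset.powersetCard i Finset.univ) with hT
  have hle : (Finset.univ.filter fun y : ι → Bool => hammingDist x y ≤ t).card ≤ T.card := by
    apply Finset.card_le_card_of_injOn (fun y => Finset.univ.filter fun i => x i ≠ y i)
    · intro y hy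
      replace hy : hammingDist x y ≤ t := by simpa using hy
      refine Finset.mem_biUnion.mpr ⟨(Finset.univ.filter fun i => x i ≠ y i).card, ?_, ?_⟩
      · exact Finset.mem_range.mpr (Nat.lt_succ_of_le hy)
      · exact Finset.mem_powersetCard_univ.mpr rfl
    · intro y _ z _ h
      funext i
      have hi := Finset.ext_iff.mp h i
      simp only [Finset.mem_filter, Finset.mem_univ, true_and] at hi
      cases hx : x i <;> cases hy : y i <;> cases hz : z i <;> simp_all
  refine hle.trans ?_
  refine Finset.card_biUnion_le.trans (Finset.sum_le_sum fun i _ => ?_)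
  rw [Finset.card_powersetCard, Finset.card_univ]

lemma exists_packing {ι : Type*} [Fintype ι] [DecidableEq ι] (t : ℕ) :
    ∀ K : ℕ,
      (K - 1) * (∑ i ∈ Finset.range (t + 1), (Fintype.card ι).choose i)
          < 2 ^ Fintype.card ι →
      ∃ A : Finset (ι → Bool), A.card = K ∧
        ∀ x ∈ A, ∀ y ∈ A, x ≠ y → t < hammingDist x y := by
  intro K
  induction K with
  | zero => exact fun _ => ⟨∅, by simp⟩
  | succ K ih =>
    intro h
    rw [Nat.succ_sub_one] at h
    obtain ⟨A, hcard, hA⟩ := ih (lt_of_le_of_lt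
      (Nat.mul_le_mul_right _ (Nat.sub_le K 1)) h)
    set U : Finset (ι → Bool) :=
      A.biUnion (fun x => Finset.univ.filter fun y => hammingDist x y ≤ t) with hU
    have hUcard : U.card < 2 ^ Fintype.card ι := by
      calc U.card ≤ ∑ x ∈ A, (Finset.univ.filter fun y => hammingDist x y ≤ t).card :=
            Finset.card_biUnion_le
        _ ≤ ∑ _x ∈ A, ∑ i ∈ Finset.range (t + 1), (Fintype.card ι).choose i :=
            Finset.sum_le_sum fun x _ => card_ball_le x t
        _ = K * ∑ i ∈ Finset.range (t + 1), (Fintype.card ι).choose i := by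
            rw [Finset.sum_const, hcard, smul_eq_mul]
        _ < 2 ^ Fintype.card ι := h
    obtain ⟨z, hz⟩ : ∃ z, z ∉ U := by
      by_contra hc
      push_neg at hc
      have : U = Finset.univ := Finset.eq_univ_iff_forall.mpr hc
      rw [this, Finset.card_univ, Fintype.card_fun, Fintype.card_bool] at hUcard
      exact lt_irrefl _ hUcard
    have hzA : z ∉ A := fun hzA =>
      hz (Finset.mem_biUnion.mpr ⟨z, hzA, by simp [hammingDist_self]⟩)
    refine ⟨insert z A, by rw [Finset.card_insert_of_notMem hzA, hcard], ?_⟩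
    have hdist : ∀ y ∈ A, t < hammingDist z y := by
      intro y hy
      by_contra hle
      push_neg at hle
      exact hz (Finset.mem_biUnion.mpr ⟨y, hy, by
        simp [hammingDist_comm y z ▸ hle, hammingDist_comm z y ▸ hle,
          (hammingDist_comm z y : hammingDist z y = hammingDist y z) ▸ hle]⟩)
    intro x hx y hy hxy
    rcases Finset.mem_insert.mp hx with hx' | hx' <;>
      rcases Finset.mem_insert.mp hy with hy' | hy'
    · exact absurd (hx'.trans hy'.symm) hxy
    · exact hx' ▸ hdist y hy'
    · rw [hy', hammingDist_comm]
      exact hdist x hx'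
    · exact hA x hx' y hy' hxy

lemma count_lt (n : ℕ) (hn : 1 ≤ n) :
    Nat.floor (Real.exp ((n : ℝ) / 16)) *
        (∑ i ∈ Finset.range (n / 4 + 1), n.choose i) < 2 ^ n := by
  have key : (Nat.floor (Real.exp ((n : ℝ) / 16)) : ℝ) *
      (∑ i ∈ Finset.range (n / 4 + 1), (n.choose i : ℝ)) < 2 ^ n := by
    set t := n / 4 with ht
    have hsum : (∑ i ∈ Finset.range (t + 1), (n.choose i : ℝ)) ≤ (3 : ℝ) ^ t * (4 / 3) ^ n := by
      calc (∑ i ∈ Finset.range (t + 1), (n.choose i : ℝ))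
          ≤ ∑ i ∈ Finset.range (t + 1), (1 / 3 : ℝ) ^ i * 1 ^ (n - i) * (n.choose i) * 3 ^ t := by
            apply Finset.sum_le_sum
            intro i hi
            have hi' : i ≤ t := Nat.lt_succ_iff.mp (Finset.mem_range.mp hi)
            have h3 : (3 : ℝ) ^ i ≤ 3 ^ t := pow_le_pow_right₀ (by norm_num) hi'
            have hpos : (0 : ℝ) < 3 ^ i := by positivity
            have h1 : (1 : ℝ) ≤ (1 / 3) ^ i * 3 ^ t := by
              rw [one_div, inv_pow, ← div_eq_inv_mul, le_div_iff₀ hpos]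
              simpa using h3
            have hC : (0 : ℝ) ≤ (n.choose i : ℝ) := Nat.cast_nonneg _
            rw [one_pow]
            nlinarith
        _ ≤ ∑ i ∈ Finset.range (n + 1), (1 / 3 : ℝ) ^ i * 1 ^ (n - i) * (n.choose i) * 3 ^ t := by
            apply Finset.sum_le_sum_of_subset_of_nonneg
            · exact Finset.range_subset_range.mpr (by omega)
            · intro i _ _
              positivity
        _ = (3 : ℝ) ^ t * (1 / 3 + 1) ^ n := by
            rw [← Finset.sum_mul, ← add_pow, mul_comm]
        _ = (3 : ℝ) ^ t * (4 / 3) ^ n := by norm_num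
    have hfl : (Nat.floor (Real.exp ((n : ℝ) / 16)) : ℝ) ≤ Real.exp ((n : ℝ) / 16) :=
      Nat.floor_le (Real.exp_nonneg _)
    have hmain : Real.exp ((n : ℝ) / 16) * ((3 : ℝ) ^ t * (4 / 3) ^ n) < 2 ^ n := by
      have ht' : (t : ℝ) ≤ (n : ℝ) / 4 := by
        have h4 : t * 4 ≤ n := Nat.div_mul_le_self n 4
        have : ((t * 4 : ℕ) : ℝ) ≤ (n : ℝ) := Nat.cast_le.mpr h4
        push_cast at this
        linarith
      have h3t : (3 : ℝ) ^ t ≤ (3 : ℝ) ^ ((n : ℝ) / 4) := by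
        rw [← Real.rpow_natCast 3 t]
        exact Real.rpow_le_rpow_of_exponent_le (by norm_num) ht'
      have e1 : Real.exp ((n : ℝ) / 16) = (Real.exp (1 / 16)) ^ n := by
        rw [← Real.exp_nat_mul]
        ring_nf
      have e2 : (3 : ℝ) ^ ((n : ℝ) / 4) = ((3 : ℝ) ^ ((1 : ℝ) / 4)) ^ n := by
        rw [← Real.rpow_natCast ((3 : ℝ) ^ ((1 : ℝ) / 4)) n, ← Real.rpow_mul (by norm_num)]
        ring_nf
      have base : Real.exp (1 / 16) * ((3 : ℝ) ^ ((1 : ℝ) / 4) * (4 / 3)) < 2 := by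
        have h16 : (Real.exp (1 / 16) * ((3 : ℝ) ^ ((1 : ℝ) / 4) * (4 / 3))) ^ 16
            < 2 ^ 16 := by
          have hee : (Real.exp (1 / 16)) ^ 16 = Real.exp 1 := by
            rw [← Real.exp_nat_mul]
            norm_num
          have h34 : (((3 : ℝ) ^ ((1 : ℝ) / 4)) ^ 16) = 81 := by
            rw [← Real.rpow_natCast ((3 : ℝ) ^ ((1 : ℝ) / 4)) 16, ← Real.rpow_mul (by norm_num)]
            norm_num
          rw [mul_pow, mul_pow, hee, h34]
          nlinarith [Real.exp_one_lt_d9]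
        exact lt_of_pow_lt_pow_left₀ 16 (by norm_num) h16
      have hpos1 : (0 : ℝ) ≤ Real.exp ((n : ℝ) / 16) := Real.exp_nonneg _
      have hpos2 : (0 : ℝ) ≤ (4 / 3 : ℝ) ^ n := by positivity
      calc Real.exp ((n : ℝ) / 16) * ((3 : ℝ) ^ t * (4 / 3) ^ n)
          ≤ Real.exp ((n : ℝ) / 16) * ((3 : ℝ) ^ ((n : ℝ) / 4) * (4 / 3) ^ n) := by
            apply mul_le_mul_of_nonneg_left _ hpos1
            exact mul_le_mul_of_nonneg_right h3t hpos2
        _ = (Real.exp (1 / 16) * ((3 : ℝ) ^ ((1 : ℝ) / 4) * (4 / 3))) ^ n := by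
            rw [e1, e2, mul_pow, mul_pow]
        _ < 2 ^ n := by
            apply pow_lt_pow_left₀ base _ (by omega)
            positivity
    have hsum0 : (0 : ℝ) ≤ ∑ i ∈ Finset.range (t + 1), (n.choose i : ℝ) :=
      Finset.sum_nonneg fun i _ => Nat.cast_nonneg _
    calc (Nat.floor (Real.exp ((n : ℝ) / 16)) : ℝ) *
          (∑ i ∈ Finset.range (t + 1), (n.choose i : ℝ))
        ≤ Real.exp ((n : ℝ) / 16) * ((3 : ℝ) ^ t * (4 / 3) ^ n) :=
          mul_le_mul hfl hsum (by positivity) (Real.exp_nonneg _)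
      _ < 2 ^ n := hmain
  have := key
  push_cast at this
  exact_mod_cast this
open Matrix



lemma rowMaxNorm_nonneg {n k : ℕ} (U : Matrix (Fin n) (Fin k) ℝ) : 0 ≤ rowMaxNorm U :=
  Real.iSup_nonneg fun _ => Real.sqrt_nonneg _

lemma maxNorm_le_of {d1 d2 k : ℕ} (hk : 0 < k) (M : Matrix (Fin d1) (Fin d2) ℝ)
    (U : Matrix (Fin d1) (Fin k) ℝ) (V : Matrix (Fin d2) (Fin k) ℝ) (hM : M = U * Vᵀ) :
    maxNorm M ≤ rowMaxNorm U * rowMaxNorm V := by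
  apply csInf_le
  · refine ⟨0, fun c hc => ?_⟩
    obtain ⟨k', U', V', -, -, rfl⟩ := hc
    exact mul_nonneg (rowMaxNorm_nonneg _) (rowMaxNorm_nonneg _)
  · exact ⟨k, U, V, hk, hM, rfl⟩

lemma linfNorm_of_entries {d1 d2 : ℕ} (hd1 : 0 < d1) (hd2 : 0 < d2) (c : ℝ) (hc : 0 ≤ c)
    (N : Matrix (Fin d1) (Fin d2) ℝ) (h : ∀ k l, N k l = c ∨ N k l = -c) :
    linfNorm N = c := by
  haveI : Nonempty (Fin d1) := ⟨⟨0, hd1⟩⟩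
  haveI : Nonempty (Fin d2) := ⟨⟨0, hd2⟩⟩
  have habs : ∀ k l, |N k l| = c := by
    intro k l
    rcases h k l with h' | h' <;> rw [h']
    · exact abs_of_nonneg hc
    · rw [abs_neg]
      exact abs_of_nonneg hc
  unfold linfNorm
  simp only [habs, ciSup_const]

lemma frobSq_of_entries {d1 d2 : ℕ} (c : ℝ) (N : Matrix (Fin d1) (Fin d2) ℝ)
    (h : ∀ k l, N k l = c ∨ N k l = -c) :
    frobeniusNorm N ^ 2 = (d1 * d2 : ℝ) * c ^ 2 := by
  rw [show frobeniusNorm N ^ 2 = ∑ k, ∑ l, (N k l) ^ 2 from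
    Real.sq_sqrt (Finset.sum_nonneg fun k _ => Finset.sum_nonneg fun l _ => sq_nonneg _)]
  have hsq : ∀ k l, (N k l) ^ 2 = c ^ 2 := by
    intro k l
    rcases h k l with h' | h' <;> rw [h'] <;> ring
  simp only [hsq, Finset.sum_const, Finset.card_univ, Fintype.card_fin, nsmul_eq_mul]
  push_cast
  ring

lemma frobSq_eq_sum {d1 d2 : ℕ} (N : Matrix (Fin d1) (Fin d2) ℝ) :
    frobeniusNorm N ^ 2 = ∑ k, ∑ l, (N k l) ^ 2 := by
  unfold frobeniusNorm
  exact Real.sq_sqrt (Finset.sum_nonneg fun k _ => Finset.sum_nonneg fun l _ => sq_nonneg _)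

lemma sum_mod_ge {d2 m : ℕ} (hm0 : 0 < m) (g : Fin m → ℝ) (hg : ∀ j, 0 ≤ g j) :
    ((d2 / m : ℕ) : ℝ) * ∑ j, g j ≤ ∑ l : Fin d2, g ⟨(l : ℕ) % m, Nat.mod_lt _ hm0⟩ := by
  classical
  set q := d2 / m with hq
  have hψlt : ∀ (p : Fin q × Fin m), ((p.2 : ℕ) + p.1 * m) < d2 := by
    rintro ⟨i, j⟩
    calc (j : ℕ) + i * m < m + i * m := by omega
      _ = (i + 1) * m := by ring
      _ ≤ q * m := Nat.mul_le_mul_right m i.2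
      _ ≤ d2 := Nat.div_mul_le_self d2 m
  set ψ : Fin q × Fin m → Fin d2 := fun p => ⟨(p.2 : ℕ) + p.1 * m, hψlt p⟩ with hψ
  have hinj : Function.Injective ψ := by
    rintro ⟨i, j⟩ ⟨i', j'⟩ h
    have h' : (j : ℕ) + i * m = (j' : ℕ) + i' * m := congrArg Fin.val h
    have hj : (j : ℕ) < m := j.2
    have hj' : (j' : ℕ) < m := j'.2
    have e1 : ((j : ℕ) + i * m) % m = (j : ℕ) := by
      rw [Nat.add_mul_mod_self_right, Nat.mod_eq_of_lt hj]
    have e2 : ((j' : ℕ) + i' * m) % m = (j' : ℕ) := by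
      rw [Nat.add_mul_mod_self_right, Nat.mod_eq_of_lt hj']
    have e3 : ((j : ℕ) + i * m) / m = (i : ℕ) := by
      rw [Nat.add_mul_div_right _ _ hm0, Nat.div_eq_of_lt hj, zero_add]
    have e4 : ((j' : ℕ) + i' * m) / m = (i' : ℕ) := by
      rw [Nat.add_mul_div_right _ _ hm0, Nat.div_eq_of_lt hj', zero_add]
    have hjj : (j : ℕ) = (j' : ℕ) := by rw [← e1, ← e2, h']
    have hii : (i : ℕ) = (i' : ℕ) := by rw [← e3, ← e4, h']
    exact Prod.ext (Fin.ext hii) (Fin.ext hjj)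
  have hsub : ∑ l ∈ Finset.univ.image ψ, g ⟨(l : ℕ) % m, Nat.mod_lt _ hm0⟩
      ≤ ∑ l : Fin d2, g ⟨(l : ℕ) % m, Nat.mod_lt _ hm0⟩ :=
    Finset.sum_le_sum_of_subset_of_nonneg (Finset.subset_univ _) (fun _ _ _ => hg _)
  refine le_trans ?_ hsub
  rw [Finset.sum_image (fun p _ p' _ h => hinj h)]
  have hval : ∀ p : Fin q × Fin m,
      (⟨((ψ p : Fin d2) : ℕ) % m, Nat.mod_lt _ hm0⟩ : Fin m) = p.2 := by
    rintro ⟨i, j⟩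
    apply Fin.ext
    simp only [hψ]
    rw [Nat.add_mul_mod_self_right, Nat.mod_eq_of_lt j.2]
  calc ((q : ℕ) : ℝ) * ∑ j, g j = ∑ _i : Fin q, ∑ j, g j := by
        rw [Finset.sum_const, Finset.card_univ, Fintype.card_fin, nsmul_eq_mul]
    _ = ∑ p : Fin q × Fin m, g p.2 := (Fintype.sum_prod_type (f := fun p : Fin q × Fin m => g p.2)).symm
    _ = ∑ p : Fin q × Fin m, g ⟨((ψ p : Fin d2) : ℕ) % m, Nat.mod_lt _ hm0⟩ :=
        Finset.sum_congr rfl fun p _ => by rw [hval p]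
    _ ≤ ∑ p : Fin q × Fin m, g ⟨((ψ p : Fin d2) : ℕ) % m, Nat.mod_lt _ hm0⟩ := le_refl _

noncomputable def matOf (d1 d2 m : ℕ) (hm0 : 0 < m) (c : ℝ)
    (B : Fin d1 × Fin m → Bool) : Matrix (Fin d1) (Fin d2) ℝ :=
  fun k l => if B (k, ⟨(l : ℕ) % m, Nat.mod_lt _ hm0⟩) then c else -c

lemma core (d1 d2 m : ℕ) (hd1 : 0 < d1) (hd2 : 0 < d2)
    (hm0 : 0 < m) (hm2 : m ≤ d2) (c : ℝ) (hc : 0 < c) :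
    ∃ P : Finset (Matrix (Fin d1) (Fin d2) ℝ),
      P.card = Nat.floor (Real.exp (((d1 * m : ℕ) : ℝ) / 16)) + 1 ∧
      (∀ N ∈ P, (∀ k l, N k l = c ∨ N k l = -c) ∧
        ∃ (U : Matrix (Fin d1) (Fin m) ℝ) (V : Matrix (Fin d2) (Fin m) ℝ),
          N = U * Vᵀ ∧ rowMaxNorm U = c * Real.sqrt m ∧ rowMaxNorm V = 1) ∧
      (∀ N ∈ P, ∀ N' ∈ P, N ≠ N' →
        (d1 * d2 : ℝ) / 8 * (2 * c) ^ 2 < ∑ k, ∑ l, (N k l - N' k l) ^ 2) := by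
  classical
  haveI : Nonempty (Fin d1) := ⟨⟨0, hd1⟩⟩
  haveI : Nonempty (Fin d2) := ⟨⟨0, hd2⟩⟩
  set n := d1 * m with hn
  have hn1 : 1 ≤ n := Nat.one_le_iff_ne_zero.mpr (by positivity)
  set t := n / 4 with htdef
  have hcardι : Fintype.card (Fin d1 × Fin m) = n := by simp [hn]
  set K := Nat.floor (Real.exp ((n : ℝ) / 16)) + 1 with hK
  obtain ⟨A, hAcard, hApack⟩ := exists_packing (ι := Fin d1 × Fin m) t K (by
    rw [hcardι, hK, Nat.add_sub_cancel]
    exact count_lt n hn1)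
  set f := matOf d1 d2 m hm0 c with hf
  have hfinj : Function.Injective f := by
    intro B B' h
    funext p
    obtain ⟨k, j⟩ := p
    have hjd2 : (j : ℕ) < d2 := lt_of_lt_of_le j.2 hm2
    have := congrFun (congrFun h k) ⟨(j : ℕ), hjd2⟩
    simp only [hf, matOf] at this
    have hj : (⟨(j : ℕ) % m, Nat.mod_lt _ hm0⟩ : Fin m) = j :=
      Fin.ext (Nat.mod_eq_of_lt j.2)
    rw [hj] at this
    cases hBv : B (k, j) <;> cases hBv' : B' (k, j)
    · rfl
    · rw [hBv, hBv'] at this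
      norm_num at this
      linarith
    · rw [hBv, hBv'] at this
      norm_num at this
      linarith
    · rfl
  refine ⟨A.image f, ?_, ?_, ?_⟩
  · rw [Finset.card_image_of_injective _ hfinj, hAcard]
  · intro N hN
    obtain ⟨B, hB, rfl⟩ := Finset.mem_image.mp hN
    constructor
    · intro k l
      simp only [hf, matOf]
      by_cases h : B (k, ⟨(l : ℕ) % m, Nat.mod_lt _ hm0⟩) <;> simp [h]
    · refine ⟨fun k j => if B (k, j) then c else -c,
        fun l j => if j = ⟨(l : ℕ) % m, Nat.mod_lt _ hm0⟩ then 1 else 0, ?_, ?_, ?_⟩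
      · funext k l
        change matOf d1 d2 m hm0 c B k l = ∑ j : Fin m, (if B (k, j) then c else -c) *
          (if j = (⟨(l : ℕ) % m, Nat.mod_lt _ hm0⟩ : Fin m) then (1 : ℝ) else 0)
        simp only [hf, matOf, Matrix.mul_apply, Matrix.transpose_apply, mul_ite, mul_one,
          mul_zero]
        rw [Finset.sum_ite_eq' Finset.univ (⟨(l : ℕ) % m, Nat.mod_lt _ hm0⟩ : Fin m)
          (fun j => if B (k, j) then c else -c)]
        simp
      · have h1 : ∀ k : Fin d1,
            Real.sqrt (∑ j, ((if B (k, j) then c else -c) : ℝ) ^ 2) = c * Real.sqrt m := by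
          intro k
          have h2 : ∑ j : Fin m, ((if B (k, j) then c else -c) : ℝ) ^ 2 = (m : ℝ) * c ^ 2 := by
            have : ∀ j : Fin m, ((if B (k, j) then c else -c) : ℝ) ^ 2 = c ^ 2 := by
              intro j
              by_cases h : B (k, j) <;> simp [h] <;> ring
            simp only [this, Finset.sum_const, Finset.card_univ, Fintype.card_fin,
              nsmul_eq_mul]
          rw [h2, show (m : ℝ) * c ^ 2 = (c * Real.sqrt m) ^ 2 by
            rw [mul_pow, Real.sq_sqrt (Nat.cast_nonneg m)]; ring]
          exact Real.sqrt_sq (by positivity)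
        unfold rowMaxNorm
        simp only [h1, ciSup_const]
      · have h1 : ∀ l : Fin d2,
            Real.sqrt (∑ j : Fin m,
              ((if j = (⟨(l : ℕ) % m, Nat.mod_lt _ hm0⟩ : Fin m) then (1 : ℝ) else 0)) ^ 2)
              = 1 := by
          intro l
          have h2 : ∑ j : Fin m,
              ((if j = (⟨(l : ℕ) % m, Nat.mod_lt _ hm0⟩ : Fin m) then (1 : ℝ) else 0)) ^ 2
              = 1 := by
            have : ∀ j : Fin m,
                ((if j = (⟨(l : ℕ) % m, Nat.mod_lt _ hm0⟩ : Fin m) then (1 : ℝ) else 0)) ^ 2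
                = if j = (⟨(l : ℕ) % m, Nat.mod_lt _ hm0⟩ : Fin m) then (1 : ℝ) else 0 := by
              intro j
              by_cases h : j = (⟨(l : ℕ) % m, Nat.mod_lt _ hm0⟩ : Fin m) <;> simp [h]
            rw [Finset.sum_congr rfl fun j _ => this j]
            rw [Finset.sum_ite_eq' Finset.univ _ (fun _ => (1 : ℝ))]
            simp
          rw [h2, Real.sqrt_one]
        unfold rowMaxNorm
        simp only [h1, ciSup_const]
  · intro N hN N' hN' hne
    obtain ⟨B, hB, rfl⟩ := Finset.mem_image.mp hN
    obtain ⟨B', hB', rfl⟩ := Finset.mem_image.mp hN'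
    have hBB : B ≠ B' := fun h => hne (by rw [h])
    have hdist := hApack B hB B' hB' hBB
    set g : Fin d1 → Fin m → ℝ :=
      fun k j => if B (k, j) = B' (k, j) then 0 else (2 * c) ^ 2 with hg
    have hg0 : ∀ k j, 0 ≤ g k j := by
      intro k j
      simp only [hg]
      by_cases h : B (k, j) = B' (k, j) <;> simp [h] <;> positivity
    have hentry : ∀ (k : Fin d1) (l : Fin d2),
        (f B k l - f B' k l) ^ 2 = g k ⟨(l : ℕ) % m, Nat.mod_lt _ hm0⟩ := by
      intro k l
      simp only [hf, matOf, hg]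
      by_cases h1 : B (k, ⟨(l : ℕ) % m, Nat.mod_lt _ hm0⟩) <;>
        by_cases h2 : B' (k, ⟨(l : ℕ) % m, Nat.mod_lt _ hm0⟩) <;> simp [h1, h2] <;> ring
    set q := d2 / m with hqdef
    have hstep1 : ∀ k : Fin d1,
        ((q : ℕ) : ℝ) * ∑ j, g k j ≤ ∑ l : Fin d2, (f B k l - f B' k l) ^ 2 := by
      intro k
      have := sum_mod_ge (d2 := d2) hm0 (g k) (hg0 k)
      calc ((q : ℕ) : ℝ) * ∑ j, g k j
          ≤ ∑ l : Fin d2, g k ⟨(l : ℕ) % m, Nat.mod_lt _ hm0⟩ := this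
        _ = ∑ l : Fin d2, (f B k l - f B' k l) ^ 2 :=
          Finset.sum_congr rfl fun l _ => (hentry k l).symm
    have hsum2 : ∑ k, ∑ j, g k j = ((hammingDist B B' : ℕ) : ℝ) * (2 * c) ^ 2 := by
      rw [← Fintype.sum_prod_type (f := fun p : Fin d1 × Fin m => g p.1 p.2)]
      simp only [hg]
      rw [Finset.sum_ite, Finset.sum_const_zero, zero_add, Finset.sum_const, nsmul_eq_mul]
      congr 2
    have htotal : ((q : ℕ) : ℝ) * (((hammingDist B B' : ℕ) : ℝ) * (2 * c) ^ 2)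
        ≤ ∑ k, ∑ l, (f B k l - f B' k l) ^ 2 := by
      rw [← hsum2, Finset.mul_sum]
      exact Finset.sum_le_sum fun k _ => hstep1 k
    -- numeric bounds
    have hq1 : 1 ≤ q := (Nat.one_le_div_iff hm0).mpr hm2
    have hq2 : d2 ≤ 2 * (m * q) := by
      rw [hqdef]
      have h1 := Nat.div_add_mod d2 m
      have h2 : d2 % m < m := Nat.mod_lt _ hm0
      have h3 : m ≤ m * (d2 / m) := Nat.le_mul_of_pos_right m ((Nat.one_le_div_iff hm0).mpr hm2)
      omega
    have ht4 : n < 4 * t + 4 := by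
      rw [htdef]
      have h1 := Nat.div_add_mod n 4
      have h2 : n % 4 < 4 := Nat.mod_lt _ (by norm_num)
      omega
    have hham : t + 1 ≤ hammingDist B B' := hdist
    have hqR : (d2 : ℝ) ≤ 2 * (m : ℝ) * (q : ℝ) := by exact_mod_cast (by linarith [hq2] : (d2:ℕ) ≤ 2*(m*q)) |>.trans_eq (by push_cast; ring)
    have htR : (n : ℝ) < 4 * (t : ℝ) + 4 := by exact_mod_cast ht4
    have hhamR : (t : ℝ) + 1 ≤ (hammingDist B B' : ℝ) := by exact_mod_cast hham
    have hnR : (n : ℝ) = (d1 : ℝ) * (m : ℝ) := by exact_mod_cast hn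
    have hqpos : (0 : ℝ) < (q : ℝ) := by exact_mod_cast hq1
    have hmpos : (0 : ℝ) < (m : ℝ) := by exact_mod_cast hm0
    have hd2pos : (0 : ℝ) < (d2 : ℝ) := by exact_mod_cast hd2
    have hd1pos : (0 : ℝ) < (d1 : ℝ) := by exact_mod_cast hd1
    have hkey : (d1 : ℝ) * (d2 : ℝ) / 8 < (q : ℝ) * ((hammingDist B B' : ℝ)) := by
      have h1 : (d2 : ℝ) / (2 * (m : ℝ)) ≤ (q : ℝ) := by
        rw [div_le_iff₀ (by positivity)]
        linarith
      have h2 : (d1 : ℝ) * (m : ℝ) / 4 < (t : ℝ) + 1 := by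
        rw [← hnR]
        linarith
      have h3 : (d2 : ℝ) / (2 * (m : ℝ)) * ((d1 : ℝ) * (m : ℝ) / 4)
          = (d1 : ℝ) * (d2 : ℝ) / 8 := by
        field_simp
        ring
      nlinarith [mul_pos hd1pos hmpos, div_pos hd2pos (by positivity : (0:ℝ) < 2 * (m:ℝ))]
    calc (d1 * d2 : ℝ) / 8 * (2 * c) ^ 2
        < (q : ℝ) * ((hammingDist B B' : ℝ)) * (2 * c) ^ 2 :=
          mul_lt_mul_of_pos_right hkey (by positivity)
      _ = ((q : ℕ) : ℝ) * (((hammingDist B B' : ℕ) : ℝ) * (2 * c) ^ 2) := by ring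
      _ ≤ ∑ k, ∑ l, (f B k l - f B' k l) ^ 2 := htotal


/-- existence of a packing set `S(α, γ) ⊆ K_max(α, R)` of cardinality
`⌊exp(r · max(d1,d2)/(16γ²))⌋ + 1` consisting of matrices with entries `±γα/2`
(hence `‖N‖_∞ = γα/2` and `‖N‖_F²/(d1 d2) = γ²α²/4`) and rank at most `r/γ²`, any
two distinct elements of which satisfy `‖N − N'‖_F²/(d1 d2) > γ²α²/8`; here `r = (R/α)²`
and `r/γ²` is an integer which is at most `min(d1, d2)`. -/
theorem exists_packing_set (d1 d2 : ℕ) (hd1 : 0 < d1) (hd2 : 0 < d2) (α R γ : ℝ)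
    (hα : 0 < α) (hR : 0 < R) (hγ0 : 0 < γ) (hγ1 : γ ≤ 1)
    (m : ℕ) (hm : (m : ℝ) = (R / α) ^ 2 / γ ^ 2) (hmle : m ≤ min d1 d2) :
    ∃ P : Finset (Matrix (Fin d1) (Fin d2) ℝ),
      P.card = Nat.floor (Real.exp ((R / α) ^ 2 * (max d1 d2 : ℝ) / (16 * γ ^ 2))) + 1 ∧
      (∀ N ∈ P,
        (∀ k l, N k l = γ * α / 2 ∨ N k l = -(γ * α / 2)) ∧
        linfNorm N = γ * α / 2 ∧
        frobeniusNorm N ^ 2 / (d1 * d2 : ℝ) = γ ^ 2 * α ^ 2 / 4 ∧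
        (N.rank : ℝ) ≤ (R / α) ^ 2 / γ ^ 2 ∧
        linfNorm N ≤ α ∧ maxNorm N ≤ R) ∧
      (∀ N ∈ P, ∀ N' ∈ P, N ≠ N' →
        γ ^ 2 * α ^ 2 / 8 < frobeniusNorm (N - N') ^ 2 / (d1 * d2 : ℝ)) := by
  have hα0 : α ≠ 0 := ne_of_gt hα
  have hγ0' : γ ≠ 0 := ne_of_gt hγ0
  set c : ℝ := γ * α / 2 with hcdef
  have hcpos : 0 < c := by positivity
  have hm0 : 0 < m := by
    by_contra h
    push_neg at h
    have hm00 : m = 0 := Nat.le_zero.mp h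
    have : ((m : ℕ) : ℝ) = 0 := by rw [hm00]; norm_num
    rw [hm] at this
    have : (0 : ℝ) < (R / α) ^ 2 / γ ^ 2 := by positivity
    linarith [this]
  have hmd1 : m ≤ d1 := hmle.trans (min_le_left _ _)
  have hmd2 : m ≤ d2 := hmle.trans (min_le_right _ _)
  have hRa : (R / α) ^ 2 = (m : ℝ) * γ ^ 2 := by
    rw [hm]
    field_simp
  have hmR : (m : ℝ) = (R / (α * γ)) ^ 2 := by
    rw [hm]
    field_simp
  have hsqrtm : Real.sqrt (m : ℝ) = R / (α * γ) := by
    rw [hmR, Real.sqrt_sq (by positivity)]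
  have hcs : c * Real.sqrt (m : ℝ) = R / 2 := by
    rw [hsqrtm, hcdef]
    field_simp
  have hd1R : (0 : ℝ) < (d1 : ℝ) := by exact_mod_cast hd1
  have hd2R : (0 : ℝ) < (d2 : ℝ) := by exact_mod_cast hd2
  have hdd : (0 : ℝ) < (d1 : ℝ) * (d2 : ℝ) := by positivity
  have hc2 : (2 * c) ^ 2 = γ ^ 2 * α ^ 2 := by rw [hcdef]; ring
  have hcsq : c ^ 2 = γ ^ 2 * α ^ 2 / 4 := by rw [hcdef]; ring
  rcases le_or_gt d2 d1 with hcase | hcase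
  · -- d2 ≤ d1, max = d1
    obtain ⟨P, hPcard, hPmem, hPdist⟩ := core d1 d2 m hd1 hd2 hm0 hmd2 c hcpos
    have harg : ((d1 * m : ℕ) : ℝ) / 16 = (R / α) ^ 2 * (max d1 d2 : ℝ) / (16 * γ ^ 2) := by
      rw [hRa]
      have hmax : (max (d1 : ℝ) (d2 : ℝ)) = (d1 : ℝ) :=
        max_eq_left (by exact_mod_cast hcase)
      push_cast
      rw [hmax]
      field_simp
    refine ⟨P, ?_, ?_, ?_⟩
    · rw [hPcard, harg]
    · intro N hN
      obtain ⟨hent, U, V, hNfac, hU, hV⟩ := hPmem N hN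
      have hlinf : linfNorm N = c := linfNorm_of_entries hd1 hd2 c hcpos.le N hent
      refine ⟨hent, hlinf, ?_, ?_, ?_, ?_⟩
      · rw [frobSq_of_entries c N hent, mul_div_cancel_left₀ _ (ne_of_gt hdd), hcsq]
      · have hrank : N.rank ≤ m := by
          rw [hNfac]
          exact (Matrix.rank_mul_le_left U Vᵀ).trans
            ((Matrix.rank_le_card_width U).trans (by simp))
        calc (N.rank : ℝ) ≤ (m : ℝ) := by exact_mod_cast hrank
          _ = (R / α) ^ 2 / γ ^ 2 := hm.symm ▸ rfl
      · rw [hlinf, hcdef]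
        nlinarith
      · calc maxNorm N ≤ rowMaxNorm U * rowMaxNorm V := maxNorm_le_of hm0 N U V hNfac
          _ = R / 2 := by rw [hU, hV, mul_one, hcs]
          _ ≤ R := by linarith
    · intro N hN N' hN' hne
      have hlt := hPdist N hN N' hN' hne
      rw [frobSq_eq_sum]
      simp only [Matrix.sub_apply]
      rw [lt_div_iff₀ hdd]
      have heq : γ ^ 2 * α ^ 2 / 8 * ((d1 : ℝ) * (d2 : ℝ))
          = (d1 * d2 : ℝ) / 8 * (2 * c) ^ 2 := by rw [hc2]; ring
      rw [heq]
      exact hlt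
  · -- d1 < d2, max = d2
    obtain ⟨P₀, hPcard, hPmem, hPdist⟩ := core d2 d1 m hd2 hd1 hm0 hmd1 c hcpos
    have htrinj : Function.Injective
        (fun M : Matrix (Fin d2) (Fin d1) ℝ => Mᵀ) := fun M M' h => by
      have := congrArg Matrix.transpose h
      simpa using this
    refine ⟨P₀.image (fun M => Mᵀ), ?_, ?_, ?_⟩
    · rw [Finset.card_image_of_injective _ htrinj, hPcard]
      congr 2
      rw [hRa]
      have hmax : (max (d1 : ℝ) (d2 : ℝ)) = (d2 : ℝ) :=
        max_eq_right (by exact_mod_cast hcase.le)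
      push_cast
      rw [hmax]
      field_simp
    · intro N hN
      obtain ⟨M, hM, rfl⟩ := Finset.mem_image.mp hN
      obtain ⟨hent, U, V, hMfac, hU, hV⟩ := hPmem M hM
      have hent' : ∀ k l, Mᵀ k l = c ∨ Mᵀ k l = -c := fun k l => hent l k
      have hfac' : Mᵀ = V * Uᵀ := by
        rw [hMfac, Matrix.transpose_mul, Matrix.transpose_transpose]
      have hlinf : linfNorm Mᵀ = c := linfNorm_of_entries hd1 hd2 c hcpos.le Mᵀ hent'
      refine ⟨hent', hlinf, ?_, ?_, ?_, ?_⟩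
      · rw [frobSq_of_entries c Mᵀ hent', mul_div_cancel_left₀ _ (ne_of_gt hdd), hcsq]
      · have hrank : Mᵀ.rank ≤ m := by
          rw [hfac']
          exact (Matrix.rank_mul_le_left V Uᵀ).trans
            ((Matrix.rank_le_card_width V).trans (by simp))
        calc ((Mᵀ).rank : ℝ) ≤ (m : ℝ) := by exact_mod_cast hrank
          _ = (R / α) ^ 2 / γ ^ 2 := hm.symm ▸ rfl
      · rw [hlinf, hcdef]
        nlinarith
      · calc maxNorm Mᵀ ≤ rowMaxNorm V * rowMaxNorm U := maxNorm_le_of hm0 Mᵀ V U hfac'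
          _ = R / 2 := by rw [hU, hV, one_mul, hcs]
          _ ≤ R := by linarith
    · intro N hN N' hN' hne
      obtain ⟨M, hM, rfl⟩ := Finset.mem_image.mp hN
      obtain ⟨M', hM', rfl⟩ := Finset.mem_image.mp hN'
      have hMne : M ≠ M' := fun h => hne (by rw [h])
      have hlt := hPdist M hM M' hM' hMne
      rw [frobSq_eq_sum]
      simp only [Matrix.sub_apply, Matrix.transpose_apply]
      rw [Finset.sum_comm, lt_div_iff₀ hdd]
      have heq : γ ^ 2 * α ^ 2 / 8 * ((d1 : ℝ) * (d2 : ℝ))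
          = (d2 * d1 : ℝ) / 8 * (2 * c) ^ 2 := by rw [hc2]; ring
      rw [heq]
      exact hlt
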